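/- arXiv:2112.05001 — 2 statements merged into one kernel-verified Lean document; each statement's English description precedes it below -/
import Mathlib

section
/- Let G be a finite group, Γ a group, and X a G-set. The set Fix_{Γ,G}(X) = {(α, x) ∈ Hom(Γ,G) × X : α(γ)·x = x for all γ ∈ Γ}, with G acting by g·(α,x) = (gαg⁻¹, g·x), is G-equivariantly bijective to the disjoint union over representatives α of the conjugation orbits of Hom(Γ,G) of the induced G-sets G ×_{C_G(α(Γ))} X^{α(Γ)}. -/
variable {Γ G X : Type*} [Group Γ] [Group G] [MulAction G X]

/-- `Fix_{Γ,G}(X) = {(α,x) : α(γ)•x = x for all γ}`. -/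
def FixPts (Γ G X : Type*) [Group Γ] [Group G] [MulAction G X] : Type _ :=
  {q : (Γ →* G) × X // ∀ γ : Γ, q.1 γ • q.2 = q.2}

/-- Conjugation of a homomorphism `α : Γ → G` by `g ∈ G`. -/
def conjHom (g : G) (α : Γ →* G) : Γ →* G :=
  ((MulAut.conj g).toMonoidHom).comp α

/-- The `G`-action on `Fix_{Γ,G}(X)`: `g • (α,x) = (gαg⁻¹, g•x)`. -/
def fixSmul (g : G) (q : FixPts Γ G X) : FixPts Γ G X :=
  ⟨(conjHom g q.1.1, g • q.1.2), by
    intro γ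
    simp only [conjHom, MonoidHom.comp_apply, MulEquiv.coe_toMonoidHom, MulAut.conj_apply,
      mul_smul, inv_smul_smul]
    rw [q.2 γ]⟩

/-- The conjugation equivalence relation on `Hom(Γ,G)`. -/
def conjSetoid (Γ G : Type*) [Group Γ] [Group G] : Setoid (Γ →* G) where
  r α β := ∃ g : G, β = conjHom g α
  iseqv := by
    constructor
    · exact fun α => ⟨1, by ext γ; simp [conjHom]⟩
    · rintro α β ⟨g, rfl⟩
      exact ⟨g⁻¹, by ext γ; simp [conjHom, mul_assoc]⟩
    · rintro α β δ ⟨g, rfl⟩ ⟨g', rfl⟩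
      exact ⟨g' * g, by ext γ; simp [conjHom, mul_assoc]⟩

/-- The fixed points `X^{α(Γ)}`. -/
def fixedByHom (α : Γ →* G) (X : Type*) [MulAction G X] : Type _ :=
  {x : X // ∀ γ : Γ, α γ • x = x}

/-- The action of the centralizer `C_G(α(Γ))` on `X^{α(Γ)}`. -/
def centAct (α : Γ →* G) (k : Subgroup.centralizer (Set.range α)) (x : fixedByHom α X) :
    fixedByHom α X :=
  ⟨(k : G) • x.1, by
    intro γ
    rw [smul_smul, k.2 (α γ) ⟨γ, rfl⟩, ← smul_smul, x.2 γ]⟩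

/-- The induced `G`-set `G ×_K Y`: quotient of `G × Y` by `(gk, y) ~ (g, k·y)`. -/
def IndGSet (K : Subgroup G) (Y : Type*) (act : K → Y → Y) : Type _ :=
  Quot (fun a b : G × Y => ∃ k : K, a.1 = b.1 * k ∧ b.2 = act k a.2)

/-- `G` acts on `G ×_K Y` by left multiplication on the first factor. -/
def indSmul (K : Subgroup G) (Y : Type*) (act : K → Y → Y) (g : G) :
    IndGSet K Y act → IndGSet K Y act :=
  Quot.map (fun a => (g * a.1, a.2)) (by
    rintro a b ⟨k, h1, h2⟩
    exact ⟨k, by simp only []; rw [h1, mul_assoc], h2⟩)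

section Aux

lemma conjHom_apply (g : G) (α : Γ →* G) (γ : Γ) : conjHom g α γ = g * α γ * g⁻¹ := rfl

lemma conjHom_conjHom (g h : G) (α : Γ →* G) :
    conjHom g (conjHom h α) = conjHom (g * h) α := by
  ext γ; simp [conjHom_apply, mul_assoc]

lemma conjHom_one (α : Γ →* G) : conjHom (1 : G) α = α := by
  ext γ; simp [conjHom_apply]

lemma mem_cent_of_conj_eq (β : Γ →* G) {g g' : G}
    (h : conjHom g β = conjHom g' β) :
    g'⁻¹ * g ∈ Subgroup.centralizer (Set.range ⇑β) := by
  rw [Subgroup.mem_centralizer_iff]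
  rintro y ⟨γ, rfl⟩
  have h1 : g * β γ * g⁻¹ = g' * β γ * g'⁻¹ := by
    have := congrArg (fun f : Γ →* G => f γ) h
    simpa [conjHom_apply] using this
  have h2 : g' * (β γ * (g'⁻¹ * g)) = g' * (g'⁻¹ * g * β γ) := by
    calc g' * (β γ * (g'⁻¹ * g)) = (g' * β γ * g'⁻¹) * g := by group
      _ = (g * β γ * g⁻¹) * g := by rw [h1]
      _ = g' * (g'⁻¹ * g * β γ) := by group
  exact mul_left_cancel h2

lemma conjHom_of_mem_cent (β : Γ →* G) (k : G)
    (hk : k ∈ Subgroup.centralizer (Set.range ⇑β)) : conjHom k β = β := by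
  ext γ
  have h := Subgroup.mem_centralizer_iff.mp hk (β γ) ⟨γ, rfl⟩
  rw [conjHom_apply, ← h, mul_inv_cancel_right]

/-- The inverse map: `(q, [g, y]) ↦ (conjHom g q.out, g • y)`. -/
noncomputable def bwdFun (q : Quotient (conjSetoid Γ G)) :
    G × fixedByHom (Quotient.out q) X → FixPts Γ G X :=
  fun a => ⟨(conjHom a.1 (Quotient.out q), a.1 • a.2.1), fun γ => by
    simp only [conjHom_apply, mul_smul, inv_smul_smul]
    rw [a.2.2 γ]⟩

noncomputable def bwd : (Σ q : Quotient (conjSetoid Γ G),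
      IndGSet (Subgroup.centralizer (Set.range ⇑(Quotient.out (s := conjSetoid Γ G) q)))
        (fixedByHom (Quotient.out q) X) (centAct (X := X) (Quotient.out q))) →
    FixPts Γ G X :=
  fun s => Quot.lift (bwdFun s.1) (by
    rintro a b ⟨k, h1, h2⟩
    apply Subtype.ext
    show (conjHom a.1 _, a.1 • a.2.1) = (conjHom b.1 _, b.1 • b.2.1)
    have hc1 : conjHom a.1 (Quotient.out s.1) = conjHom b.1 (Quotient.out s.1) := by
      rw [h1, ← conjHom_conjHom, conjHom_of_mem_cent _ _ k.2]
    have hc2 : a.1 • a.2.1 = b.1 • b.2.1 := by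
      rw [h1, h2]
      show (b.1 * (k : G)) • a.2.1 = b.1 • ((k : G) • a.2.1)
      rw [mul_smul]
    rw [hc1, hc2]) s.2

lemma bwd_inj : Function.Injective (bwd (Γ := Γ) (G := G) (X := X)) := by
  rintro ⟨q, u⟩ ⟨q', u'⟩
  induction u using Quot.ind with | _ a =>
  induction u' using Quot.ind with | _ b =>
  intro h
  have h1 : conjHom a.1 (Quotient.out q) = conjHom b.1 (Quotient.out q') :=
    congrArg (fun p : FixPts Γ G X => p.1.1) h
  have h2 : a.1 • a.2.1 = b.1 • b.2.1 :=
    congrArg (fun p : FixPts Γ G X => p.1.2) h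
  have hq : q = q' := by
    rw [← Quotient.out_eq q, ← Quotient.out_eq q']
    apply Quotient.sound
    refine ⟨b.1⁻¹ * a.1, ?_⟩
    have := congrArg (conjHom b.1⁻¹) h1
    rw [conjHom_conjHom, conjHom_conjHom, inv_mul_cancel, conjHom_one] at this
    exact this.symm
  subst hq
  have hk : b.1⁻¹ * a.1 ∈ Subgroup.centralizer (Set.range ⇑(Quotient.out q)) :=
    mem_cent_of_conj_eq _ h1
  congr 1
  apply Quot.sound
  refine ⟨⟨b.1⁻¹ * a.1, hk⟩, ?_, ?_⟩
  · simp [mul_assoc]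
  · apply Subtype.ext
    show b.2.1 = (b.1⁻¹ * a.1) • a.2.1
    rw [mul_smul, h2, inv_smul_smul]

lemma bwd_surj : Function.Surjective (bwd (Γ := Γ) (G := G) (X := X)) := by
  rintro ⟨⟨α, x⟩, hx⟩
  obtain ⟨g, hg⟩ : ∃ g : G, α = conjHom g (Quotient.out (Quotient.mk (conjSetoid Γ G) α)) :=
    Quotient.exact (s := conjSetoid Γ G) (Quotient.out_eq _)
  refine ⟨⟨Quotient.mk (conjSetoid Γ G) α, Quot.mk _ (g, ⟨g⁻¹ • x, ?_⟩)⟩, ?_⟩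
  · intro γ
    have hx' := hx γ
    rw [hg] at hx'
    have := congrArg (fun z : X => g⁻¹ • z) hx'
    simpa [conjHom_apply, mul_smul] using this
  · apply Subtype.ext
    show (conjHom g _, g • g⁻¹ • x) = (α, x)
    rw [← hg, smul_inv_smul]

lemma bwd_equivariant (g : G)
    (s : Σ q : Quotient (conjSetoid Γ G),
      IndGSet (Subgroup.centralizer (Set.range ⇑(Quotient.out (s := conjSetoid Γ G) q)))
        (fixedByHom (Quotient.out q) X) (centAct (X := X) (Quotient.out q))) :
    fixSmul g (bwd s) = bwd ⟨s.1, indSmul _ _ _ g s.2⟩ := by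
  obtain ⟨q, u⟩ := s
  induction u using Quot.ind with | _ a =>
  apply Subtype.ext
  show (conjHom g (conjHom a.1 (Quotient.out q)), g • a.1 • a.2.1)
      = (conjHom (g * a.1) (Quotient.out q), (g * a.1) • a.2.1)
  rw [conjHom_conjHom, mul_smul]

end Aux

/-- `Fix_{Γ,G}(X)` is `G`-equivariantly bijective to the disjoint
union, over representatives `α` of the conjugation orbits of `Hom(Γ,G)`, of the
induced `G`-sets `G ×_{C_G(α(Γ))} X^{α(Γ)}`. -/
theorem stmt2 (Γ G X : Type*) [Group Γ] [Group G] [Finite G] [MulAction G X] :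
    ∃ e : FixPts Γ G X ≃
        (Σ q : Quotient (conjSetoid Γ G),
          IndGSet (Subgroup.centralizer (Set.range ⇑(Quotient.out (s := conjSetoid Γ G) q)))
            (fixedByHom (Quotient.out q) X) (centAct (X := X) (Quotient.out q))),
      ∀ (g : G) (p : FixPts Γ G X),
        e (fixSmul g p) = ⟨(e p).1, indSmul _ _ _ g (e p).2⟩ := by
  have hbij : Function.Bijective (bwd (Γ := Γ) (G := G) (X := X)) := ⟨bwd_inj, bwd_surj⟩
  let E := Equiv.ofBijective _ hbij
  refine ⟨E.symm, fun g p => ?_⟩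
  rw [Equiv.symm_apply_eq]
  have hbp : bwd (E.symm p) = p := E.apply_symm_apply p
  calc fixSmul g p = fixSmul g (bwd (E.symm p)) := by rw [hbp]
    _ = bwd ⟨(E.symm p).1, indSmul _ _ _ g (E.symm p).2⟩ := bwd_equivariant g (E.symm p)
    _ = E ⟨(E.symm p).1, indSmul _ _ _ g (E.symm p).2⟩ := rfl
end

section
/- Let Γ be a group and G a finite group. The functor Fix_{Γ,G} from G-sets to G-sets preserves pushouts along injections: if X = X₁ ∪_{X₀} X₂ is a pushout of G-sets with X₀ → X₁ injective, then Fix_{Γ,G}(X) is the pushout of Fix_{Γ,G}(X₁) ← Fix_{Γ,G}(X₀) → Fix_{Γ,G}(X₂). -/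
variable {Γ G X : Type*} [Group Γ] [Group G] [MulAction G X]

/-- The map `Fix_{Γ,G}(X) → Fix_{Γ,G}(Y)` induced by a `G`-map `f : X → Y`. -/
def fixMap {Y : Type*} [MulAction G Y] (f : X → Y) (hf : ∀ (g : G) (x : X), f (g • x) = g • f x)
    (p : FixPts Γ G X) : FixPts Γ G Y :=
  ⟨(p.1.1, f p.1.2), by intro γ; rw [← hf, p.2 γ]⟩

universe u

/-- `Fix_{Γ,G}` preserves pushouts of `G`-sets along injections:
if `X = X₁ ∪_{X₀} X₂` is a pushout of `G`-sets (computed as a pushout of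
underlying sets) with `X₀ → X₁` injective, then `Fix_{Γ,G}(X)` is the pushout
of `Fix_{Γ,G}(X₁) ← Fix_{Γ,G}(X₀) → Fix_{Γ,G}(X₂)`. -/
theorem stmt11 (Γ G X₀ X₁ X₂ X : Type u) [Group Γ] [Group G] [Finite G]
    [MulAction G X₀] [MulAction G X₁] [MulAction G X₂] [MulAction G X]
    (i₁ : X₀ → X₁) (i₂ : X₀ → X₂) (j₁ : X₁ → X) (j₂ : X₂ → X)
    (hi₁ : ∀ (g : G) (x : X₀), i₁ (g • x) = g • i₁ x)
    (hi₂ : ∀ (g : G) (x : X₀), i₂ (g • x) = g • i₂ x)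
    (hj₁ : ∀ (g : G) (x : X₁), j₁ (g • x) = g • j₁ x)
    (hj₂ : ∀ (g : G) (x : X₂), j₂ (g • x) = g • j₂ x)
    (hinj : Function.Injective i₁)
    (hcomm : j₁ ∘ i₁ = j₂ ∘ i₂)
    (hpo : ∀ (Z : Type u) (k₁ : X₁ → Z) (k₂ : X₂ → Z), k₁ ∘ i₁ = k₂ ∘ i₂ →
      ∃! v : X → Z, v ∘ j₁ = k₁ ∧ v ∘ j₂ = k₂) :
    (fixMap (Γ := Γ) j₁ hj₁ ∘ fixMap i₁ hi₁ = fixMap j₂ hj₂ ∘ fixMap i₂ hi₂) ∧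
    ∀ (Z : Type u) (k₁ : FixPts Γ G X₁ → Z) (k₂ : FixPts Γ G X₂ → Z),
      k₁ ∘ fixMap i₁ hi₁ = k₂ ∘ fixMap i₂ hi₂ →
      ∃! v : FixPts Γ G X → Z,
        v ∘ fixMap j₁ hj₁ = k₁ ∧ v ∘ fixMap j₂ hj₂ = k₂ := by
  classical
  have hcomm' : ∀ a : X₀, j₁ (i₁ a) = j₂ (i₂ a) := fun a => congrFun hcomm a
  -- joint surjectivity
  have factA : ∀ x : X, (∃ a, j₂ a = x) ∨ (∃ a, j₁ a = x) := by
    obtain ⟨v, ⟨hv1, hv2⟩, huniq⟩ := hpo (ULift.{u} Prop)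
      (fun _ => ⟨True⟩) (fun _ => ⟨True⟩) rfl
    have h1 : (fun x : X => (⟨(∃ a, j₂ a = x) ∨ ∃ a, j₁ a = x⟩ : ULift.{u} Prop)) = v := by
      apply huniq
      constructor
      · funext x₁
        exact congrArg ULift.up (eq_true (Or.inr ⟨x₁, rfl⟩))
      · funext x₂
        exact congrArg ULift.up (eq_true (Or.inl ⟨x₂, rfl⟩))
    have h2 : (fun _ : X => (⟨True⟩ : ULift.{u} Prop)) = v := huniq _ ⟨rfl, rfl⟩
    intro x
    have := congrFun (h1.trans h2.symm) x
    have := congrArg ULift.down this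
    simp only [] at this
    rw [this]; trivial
  -- j₂ injective and description of j₁ ⁻¹ of range j₂
  have factBD : ∀ x₂₀ : X₂,
      (∀ x₂, j₂ x₂ = j₂ x₂₀ → x₂ = x₂₀) ∧
      (∀ x₁, j₁ x₁ = j₂ x₂₀ → ∃ a, i₁ a = x₁ ∧ i₂ a = x₂₀) := by
    intro x₂₀
    obtain ⟨v, ⟨hv1, hv2⟩, -⟩ := hpo (ULift.{u} Prop)
      (fun x => ⟨∃ a, i₁ a = x ∧ i₂ a = x₂₀⟩) (fun y => ⟨y = x₂₀⟩)
      (by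
        funext a
        refine congrArg ULift.up (propext ⟨?_, ?_⟩)
        · rintro ⟨a', ha1, ha2⟩
          rwa [← hinj ha1]
        · intro h; exact ⟨a, rfl, h⟩)
    constructor
    · intro x₂ hx
      have := (congrFun hv2 x₂).symm.trans
        ((congrArg v hx).trans (congrFun hv2 x₂₀))
      have := congrArg ULift.down this
      simp only [] at this
      exact of_eq_true this
    · intro x₁ hx
      have := (congrFun hv1 x₁).symm.trans
        ((congrArg v hx).trans (congrFun hv2 x₂₀))
      have := congrArg ULift.down this
      simp only [] at this
      exact of_eq_true this
  -- j₁ is injective away from the range of i₁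
  have factC : ∀ x₁₀ : X₁, (¬ ∃ a, i₁ a = x₁₀) → ∀ x', j₁ x' = j₁ x₁₀ → x' = x₁₀ := by
    intro x₁₀ hx₁₀
    obtain ⟨v, ⟨hv1, hv2⟩, -⟩ := hpo (ULift.{u} Prop)
      (fun x => ⟨x = x₁₀⟩) (fun _ => ⟨False⟩)
      (by
        funext a
        refine congrArg ULift.up (propext ⟨fun h => hx₁₀ ⟨a, h⟩, False.elim⟩))
    intro x' hx
    have := (congrFun hv1 x').symm.trans ((congrArg v hx).trans (congrFun hv1 x₁₀))
    have := congrArg ULift.down this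
    simp only [] at this
    exact of_eq_true this
  have fixext : ∀ {Y : Type u} [MulAction G Y] (p q : FixPts Γ G Y),
      p.1.1 = q.1.1 → p.1.2 = q.1.2 → p = q := by
    intro Y _ p q h1 h2
    exact Subtype.ext (Prod.ext h1 h2)
  -- the commuting square
  have sq : fixMap (Γ := Γ) j₁ hj₁ ∘ fixMap i₁ hi₁ = fixMap j₂ hj₂ ∘ fixMap i₂ hi₂ := by
    funext p
    exact fixext _ _ rfl (hcomm' p.1.2)
  refine ⟨sq, ?_⟩
  intro Z k₁ k₂ hk
  have hk' : ∀ q : FixPts Γ G X₀, k₁ (fixMap i₁ hi₁ q) = k₂ (fixMap i₂ hi₂ q) :=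
    fun q => congrFun hk q
  -- every fixed point of X comes from a fixed point of X₁ or X₂
  have gen : ∀ p : FixPts Γ G X,
      (∃ q : FixPts Γ G X₂, fixMap j₂ hj₂ q = p) ∨
      (∃ q : FixPts Γ G X₁, fixMap j₁ hj₁ q = p) := by
    rintro ⟨⟨α, x⟩, hfix⟩
    rcases factA x with ⟨x₂, hx₂⟩ | ⟨x₁, hx₁⟩
    · left
      refine ⟨⟨⟨α, x₂⟩, fun γ => (factBD x₂).1 _ ?_⟩, fixext _ _ rfl hx₂⟩
      rw [hj₂, hx₂]; exact hfix γ
    · by_cases hmem : ∃ x₂, j₂ x₂ = x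
      · left
        obtain ⟨x₂, hx₂⟩ := hmem
        refine ⟨⟨⟨α, x₂⟩, fun γ => (factBD x₂).1 _ ?_⟩, fixext _ _ rfl hx₂⟩
        rw [hj₂, hx₂]; exact hfix γ
      · right
        have hni : ¬ ∃ a, i₁ a = x₁ := by
          rintro ⟨a, rfl⟩
          exact hmem ⟨i₂ a, by rw [← hcomm', hx₁]⟩
        refine ⟨⟨⟨α, x₁⟩, fun γ => factC x₁ hni _ ?_⟩, fixext _ _ rfl hx₁⟩
        rw [hj₁, hx₁]; exact hfix γ
  have j₂inj : Function.Injective (fixMap (Γ := Γ) j₂ hj₂) := by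
    intro p q h
    have h1 : p.1.1 = q.1.1 := congrArg (fun r => r.1.1) h
    have h2 : j₂ p.1.2 = j₂ q.1.2 := congrArg (fun r => r.1.2) h
    exact fixext _ _ h1 ((factBD q.1.2).1 _ h2)
  -- definition of the induced map
  set v : FixPts Γ G X → Z := fun p =>
    if h : ∃ q : FixPts Γ G X₂, fixMap j₂ hj₂ q = p then k₂ h.choose
    else k₁ ((gen p).resolve_left h).choose with hv
  have hvj₂ : ∀ q, v (fixMap j₂ hj₂ q) = k₂ q := by
    intro q
    have hex : ∃ q', fixMap j₂ hj₂ q' = fixMap j₂ hj₂ q := ⟨q, rfl⟩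
    rw [hv]; simp only [dif_pos hex]
    exact congrArg k₂ (j₂inj hex.choose_spec)
  have hvj₁ : ∀ q, v (fixMap j₁ hj₁ q) = k₁ q := by
    intro q
    by_cases h : ∃ q' : FixPts Γ G X₂, fixMap j₂ hj₂ q' = fixMap j₁ hj₁ q
    · rw [hv]; simp only [dif_pos h]
      set q' := h.choose with hq'
      have hspec := h.choose_spec
      have h1 : q'.1.1 = q.1.1 := congrArg (fun r => r.1.1) hspec
      have h2 : j₂ q'.1.2 = j₁ q.1.2 := congrArg (fun r => r.1.2) hspec
      obtain ⟨a, ha1, ha2⟩ := (factBD q'.1.2).2 _ h2.symm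
      have hafix : ∀ γ : Γ, q.1.1 γ • a = a := by
        intro γ
        apply hinj
        rw [hi₁, ha1, q.2 γ]
      have e2 : fixMap i₂ hi₂ ⟨⟨q.1.1, a⟩, hafix⟩ = q' :=
        fixext _ _ h1.symm ha2
      have e1 : fixMap i₁ hi₁ ⟨⟨q.1.1, a⟩, hafix⟩ = q :=
        fixext _ _ rfl ha1
      rw [← e2, ← hk' ⟨⟨q.1.1, a⟩, hafix⟩, e1]
    · rw [hv]; simp only [dif_neg h]
      set q' := ((gen (fixMap j₁ hj₁ q)).resolve_left h).choose with hq'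
      have hspec : fixMap j₁ hj₁ q' = fixMap j₁ hj₁ q :=
        ((gen (fixMap j₁ hj₁ q)).resolve_left h).choose_spec
      have h1 : q'.1.1 = q.1.1 := congrArg (fun r => r.1.1) hspec
      have h2 : j₁ q'.1.2 = j₁ q.1.2 := congrArg (fun r => r.1.2) hspec
      have hni : ¬ ∃ a, i₁ a = q.1.2 := by
        rintro ⟨a, ha⟩
        have hafix : ∀ γ : Γ, q.1.1 γ • a = a := by
          intro γ; apply hinj; rw [hi₁, ha, q.2 γ]
        refine h ⟨⟨⟨q.1.1, i₂ a⟩, ?_⟩, fixext _ _ rfl ?_⟩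
        · intro γ; rw [← hi₂, hafix]
        · show j₂ (i₂ a) = j₁ q.1.2
          rw [← hcomm', ha]
      have : q'.1.2 = q.1.2 := factC _ hni _ h2
      exact congrArg k₁ (fixext _ _ h1 this)
  refine ⟨v, ⟨funext hvj₁, funext hvj₂⟩, ?_⟩
  rintro w ⟨hw1, hw2⟩
  funext p
  rcases gen p with ⟨q, rfl⟩ | ⟨q, rfl⟩
  · rw [hvj₂]; exact congrFun hw2 q
  · rw [hvj₁]; exact congrFun hw1 q
end
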